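/- For H ⊆ ℤ symmetric with 0, 1 ∈ H: the supremum of |ψ(1)| over complex-valued positive definite ψ on ℤ with ψ(0) = 1 and supp ψ ⊆ H equals the supremum over real-valued such ψ (i.e., 𝒞ℱ^♯(H) = 𝒦^♯(H)); the same holds in the finitely supported classes. -/

import Mathlib

open Complex ComplexOrder Finset MeasureTheory

noncomputable section

/-- A function on an abelian group is positive definite if all the
associated quadratic forms are nonnegative (as complex numbers, i.e.
real and nonnegative). -/
def IsPosDef {G : Type*} [AddCommGroup G] (f : G → ℂ) : Prop :=
  ∀ (n : ℕ) (x : Fin n → G) (c : Fin n → ℂ),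
    0 ≤ ∑ j, ∑ k, c j * (starRingEnd ℂ) (c k) * f (x j - x k)

lemma posdef_symm {f : ℤ → ℂ} (hf : IsPosDef f) (x : ℤ) :
    f (-x) = (starRingEnd ℂ) (f x) := by
  have h0 := hf 1 ![0] ![1]
  have h1 := hf 2 ![0, x] ![1, 1]
  have h2 := hf 2 ![0, x] ![1, Complex.I]
  simp [Fin.sum_univ_two, Fin.sum_univ_one, Complex.le_def] at h0 h1 h2
  apply Complex.ext <;> simp only [Complex.conj_re, Complex.conj_im] <;>
    linarith [h0.2, h1.2, h2.2]

lemma posdef_mul_char {f : ℤ → ℂ} (hf : IsPosDef f) (θ : ℝ) :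
    IsPosDef (fun k => f k * Complex.exp (θ * k * Complex.I)) := by
  intro n x c
  have h := hf n x (fun j => c j * Complex.exp (θ * x j * Complex.I))
  convert h using 1
  refine Finset.sum_congr rfl fun j _ => Finset.sum_congr rfl fun k _ => ?_
  simp only [map_mul]
  have hconj : (starRingEnd ℂ) (Complex.exp (θ * x k * Complex.I)) =
      Complex.exp (-(θ * x k * Complex.I)) := by
    rw [← Complex.exp_conj]
    congr 1
    simp [Complex.conj_I]
  rw [hconj]
  have hexp : Complex.exp ((θ : ℂ) * ((x j - x k : ℤ) : ℂ) * Complex.I) =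
      Complex.exp (θ * x j * Complex.I) * Complex.exp (-(θ * x k * Complex.I)) := by
    rw [← Complex.exp_add]
    congr 1
    push_cast
    ring
  rw [hexp]
  ring

lemma posdef_re {g : ℤ → ℂ} (hg : IsPosDef g) :
    IsPosDef (fun k => (((g k).re : ℝ) : ℂ)) := by
  intro n x c
  have h1 := hg n x c
  have h2 := hg n x (fun j => (starRingEnd ℂ) (c j))
  have key : ∑ j, ∑ k, c j * (starRingEnd ℂ) (c k) * (((g (x j - x k)).re : ℝ) : ℂ)
      = (∑ j, ∑ k, c j * (starRingEnd ℂ) (c k) * g (x j - x k)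
        + ∑ j, ∑ k, (starRingEnd ℂ) (c j) * (starRingEnd ℂ) ((starRingEnd ℂ) (c k)) * g (x j - x k)) / 2 := by
    rw [Finset.sum_comm (s := Finset.univ) (t := Finset.univ)
      (f := fun j k => (starRingEnd ℂ) (c j) * (starRingEnd ℂ) ((starRingEnd ℂ) (c k)) * g (x j - x k))]
    rw [← Finset.sum_add_distrib]
    rw [Finset.sum_div, Finset.sum_congr rfl fun j _ => rfl]
    refine Finset.sum_congr rfl fun j _ => ?_
    rw [← Finset.sum_add_distrib, Finset.sum_div]
    refine Finset.sum_congr rfl fun k _ => ?_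
    have hsym : g (x k - x j) = (starRingEnd ℂ) (g (x j - x k)) := by
      have := posdef_symm hg (x j - x k)
      rw [neg_sub] at this
      exact this
    rw [hsym]
    have : (((g (x j - x k)).re : ℝ) : ℂ) = (g (x j - x k) + (starRingEnd ℂ) (g (x j - x k))) / 2 := by
      rw [Complex.add_conj]
      push_cast; ring
    rw [this]
    simp only [starRingEnd_self_apply]
    ring
  rw [key]
  have h := add_nonneg h1 h2
  rw [div_eq_mul_inv]
  exact mul_nonneg h (by norm_num [Complex.le_def])

lemma realize (H : Set ℤ) {s : ℝ} (ψ : ℤ → ℂ) (hpd : IsPosDef ψ) (h0 : ψ 0 = 1)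
    (hH : ∀ n ∉ H, ψ n = 0) (habs : ‖ψ 1‖ = s) :
    ∃ φ : ℤ → ℝ, IsPosDef (fun n => ((φ n : ℝ) : ℂ)) ∧ φ 0 = 1 ∧ (∀ n ∉ H, φ n = 0) ∧
      Function.support φ ⊆ Function.support ψ ∧ |φ 1| = s := by
  set θ : ℝ := -(ψ 1).arg with hθ
  set g : ℤ → ℂ := fun k => ψ k * Complex.exp (θ * k * Complex.I) with hg
  refine ⟨fun k => (g k).re, posdef_re (posdef_mul_char hpd θ), ?_, ?_, ?_, ?_⟩
  · simp [hg, h0]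
  · intro n hn; simp [hg, hH n hn]
  · intro k hk
    simp only [Function.mem_support, ne_eq] at hk ⊢
    intro hψk
    exact hk (by simp [hg, hψk])
  · have hg1 : g 1 = (‖ψ 1‖ : ℂ) := by
      have := Complex.norm_mul_exp_arg_mul_I (ψ 1)
      rw [hg]
      simp only [Int.cast_one, mul_one]
      rw [← this, hθ]
      rw [mul_assoc, ← Complex.exp_add]
      push_cast
      ring_nf
      simp
    rw [← habs]
    simp [hg1]

theorem stmt16 (H : Set ℤ) (hsym : ∀ x ∈ H, -x ∈ H)
    (h0 : (0 : ℤ) ∈ H) (h1 : (1 : ℤ) ∈ H) :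
    sSup {s : ℝ | ∃ ψ : ℤ → ℂ, IsPosDef ψ ∧ ψ 0 = 1 ∧
        (∀ n ∉ H, ψ n = 0) ∧ ‖ψ 1‖ = s} =
      sSup {s : ℝ | ∃ ψ : ℤ → ℝ, IsPosDef (fun n => ((ψ n : ℝ) : ℂ)) ∧ ψ 0 = 1 ∧
        (∀ n ∉ H, ψ n = 0) ∧ |ψ 1| = s} ∧
    sSup {s : ℝ | ∃ ψ : ℤ → ℂ, IsPosDef ψ ∧ ψ 0 = 1 ∧
        (∀ n ∉ H, ψ n = 0) ∧ (Function.support ψ).Finite ∧ ‖ψ 1‖ = s} =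
      sSup {s : ℝ | ∃ ψ : ℤ → ℝ, IsPosDef (fun n => ((ψ n : ℝ) : ℂ)) ∧ ψ 0 = 1 ∧
        (∀ n ∉ H, ψ n = 0) ∧ (Function.support ψ).Finite ∧ |ψ 1| = s} := by
  constructor
  · congr 1
    ext s
    constructor
    · rintro ⟨ψ, hpd, hψ0, hH, habs⟩
      obtain ⟨φ, ha, hb, hc, _, he⟩ := realize H ψ hpd hψ0 hH habs
      exact ⟨φ, ha, hb, hc, he⟩
    · rintro ⟨ψ, hpd, hψ0, hH, habs⟩
      exact ⟨fun n => ((ψ n : ℝ) : ℂ), hpd, by simp [hψ0], fun n hn => by simp [hH n hn],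
        by simp [habs]⟩
  · congr 1
    ext s
    constructor
    · rintro ⟨ψ, hpd, hψ0, hH, hfin, habs⟩
      obtain ⟨φ, ha, hb, hc, hd, he⟩ := realize H ψ hpd hψ0 hH habs
      exact ⟨φ, ha, hb, hc, hfin.subset hd, he⟩
    · rintro ⟨ψ, hpd, hψ0, hH, hfin, habs⟩
      refine ⟨fun n => ((ψ n : ℝ) : ℂ), hpd, by simp [hψ0], fun n hn => by simp [hH n hn],
        ?_, by simp [habs]⟩
      apply hfin.subset
      intro k hk
      simp only [Function.mem_support, ne_eq] at hk ⊢
      exact fun h => hk (by simp [h])
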